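/- Let ε > 0, 0 < p ≤ 2, and let X be a real symmetric positive semidefinite n×n matrix. If 0 ≤ α ≤ ε^{(2−p)/2}/(2p), then the matrix X − 2αp·X·(XᵀX + εI)^{(p−2)/2} is positive semidefinite. -/

import Mathlib

open Matrix

/-- The real power of a symmetric matrix, defined spectrally: for a Hermitian matrix
`A` with eigendecomposition `A = U D U*`, `matRpow A r = U D^r U*` (junk value `0` if
`A` is not Hermitian). -/
noncomputable def matRpow {n : ℕ} (A : Matrix (Fin n) (Fin n) ℝ) (r : ℝ) :
    Matrix (Fin n) (Fin n) ℝ :=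
  if hA : A.IsHermitian then
    (hA.eigenvectorUnitary : Matrix (Fin n) (Fin n) ℝ) *
      Matrix.diagonal (fun i => hA.eigenvalues i ^ r) *
      (star (hA.eigenvectorUnitary : Matrix (Fin n) (Fin n) ℝ))
  else 0

/-- First step of the proof of Theorem 3.2: for `ε > 0`, `0 < p ≤ 2`, a real symmetric
PSD `n×n` matrix `X`, and `0 ≤ α ≤ ε^((2-p)/2) / (2p)`, the plain gradient step
`X - 2αp·X·(XᵀX + εI)^((p-2)/2)` is positive semidefinite. -/
theorem gradient_step_psd_schatten
    {n : ℕ} (ε p α : ℝ) (hε : 0 < ε) (hp0 : 0 < p) (hp2 : p ≤ 2)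
    (X : Matrix (Fin n) (Fin n) ℝ) (hX : X.PosSemidef)
    (hα0 : 0 ≤ α) (hα : α ≤ ε ^ ((2 - p) / 2) / (2 * p)) :
    Matrix.PosSemidef
      (X - (2 * α * p) • (X * matRpow (Xᵀ * X + ε • 1) ((p - 2) / 2))) := by
  have hXt : Xᵀ = X := by
    rw [← X.conjTranspose_eq_transpose_of_trivial, hX.1]
  set A : Matrix (Fin n) (Fin n) ℝ := Xᵀ * X + ε • 1 with hAdef
  have hA2 : A = X ^ 2 + ε • 1 := by rw [hAdef, hXt, pow_two]
  have hA : A.IsHermitian := by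
    rw [hA2]
    exact ((hX.pow 2).1).add (by simp [Matrix.IsHermitian])
  set U : Matrix (Fin n) (Fin n) ℝ := (hA.eigenvectorUnitary : Matrix (Fin n) (Fin n) ℝ) with hU
  set μ : Fin n → ℝ := hA.eigenvalues with hμ
  have hsUU : star U * U = 1 := Unitary.coe_star_mul_self hA.eigenvectorUnitary
  have hUsU : U * star U = 1 := Unitary.coe_mul_star_self hA.eigenvectorUnitary
  have hspec : A = U * diagonal μ * star U := by
    have := hA.spectral_theorem
    rwa [RCLike.ofReal_real_eq_id, Function.id_comp] at this
  -- eigenvalue lower bound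
  have hμε : ∀ i, ε ≤ μ i := by
    intro i
    have hv := hA.mulVec_eigenvectorBasis i
    set v : Fin n → ℝ := ⇑(hA.eigenvectorBasis i) with hvdef
    have hvne : v ≠ 0 := by
      intro h
      exact hA.eigenvectorBasis.orthonormal.ne_zero i (by ext j; exact congrFun h j)
    have hpos : 0 < star v ⬝ᵥ v := dotProduct_star_self_pos_iff.mpr hvne
    have hq : 0 ≤ star v ⬝ᵥ (X ^ 2) *ᵥ v := by
      have := (posSemidef_conjTranspose_mul_self X).dotProduct_mulVec_nonneg v
      rwa [hX.1, ← pow_two] at this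
    have h1 : star v ⬝ᵥ A *ᵥ v = μ i * (star v ⬝ᵥ v) := by
      rw [hv, dotProduct_smul, smul_eq_mul]
    have h2 : star v ⬝ᵥ A *ᵥ v = star v ⬝ᵥ (X ^ 2) *ᵥ v + ε * (star v ⬝ᵥ v) := by
      rw [hA2, add_mulVec, dotProduct_add, smul_mulVec, one_mulVec, dotProduct_smul,
        smul_eq_mul]
    nlinarith
  -- X equals U * diagonal s * star U with s i = sqrt (μ i - ε)
  set s : Fin n → ℝ := fun i => Real.sqrt (μ i - ε) with hs
  set S : Matrix (Fin n) (Fin n) ℝ := U * diagonal s * star U with hSdef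
  have hSpsd : S.PosSemidef :=
    (posSemidef_diagonal_iff.mpr fun i => Real.sqrt_nonneg _).mul_mul_conjTranspose_same U
  have hSS : S ^ 2 = X ^ 2 := by
    rw [pow_two, hSdef]
    calc U * diagonal s * star U * (U * diagonal s * star U)
        = U * (diagonal s * (star U * U) * diagonal s) * star U := by
          simp only [mul_assoc]
      _ = U * diagonal (fun i => μ i - ε) * star U := by
          have hdd : (fun i => s i * s i) = fun i => μ i - ε :=
            funext fun i => Real.mul_self_sqrt (show (0:ℝ) ≤ μ i - ε by linarith [hμε i])
          rw [hsUU, mul_one, diagonal_mul_diagonal, hdd]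
      _ = U * (diagonal μ - ε • 1) * star U := by
          rw [smul_one_eq_diagonal, ← diagonal_sub]
      _ = A - ε • (U * star U) := by
          rw [mul_sub, sub_mul, hspec]
          congr 1
          rw [mul_smul_comm, smul_mul_assoc, mul_one]
      _ = X ^ 2 := by rw [hUsU, hA2]; abel
  have hXS : X = S := by
    open scoped MatrixOrder in
    rw [← CFC.sqrt_sq X hX.nonneg, ← CFC.sqrt_sq S hSpsd.nonneg, hSS]
  -- matRpow
  set r : ℝ := (p - 2) / 2 with hr
  have hmr : matRpow A r = U * diagonal (fun i => μ i ^ r) * star U := by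
    rw [matRpow, dif_pos hA]
  -- combine
  set c : ℝ := 2 * α * p with hc
  have key : X - c • (X * matRpow A r)
      = U * diagonal (fun i => s i - c * (s i * μ i ^ r)) * star U := by
    rw [hmr, hXS, hSdef]
    calc U * diagonal s * star U - c • (U * diagonal s * star U * (U * diagonal (fun i => μ i ^ r) * star U))
        = U * diagonal s * star U - c • (U * (diagonal s * (star U * U) * diagonal (fun i => μ i ^ r)) * star U) := by
          simp only [mul_assoc]
      _ = U * diagonal s * star U - c • (U * diagonal (fun i => s i * μ i ^ r) * star U) := by
          rw [hsUU, mul_one, diagonal_mul_diagonal]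
      _ = U * (diagonal s - c • diagonal (fun i => s i * μ i ^ r)) * star U := by
          rw [mul_sub, sub_mul, mul_smul_comm, smul_mul_assoc]
      _ = U * diagonal (fun i => s i - c * (s i * μ i ^ r)) * star U := by
          rw [← diagonal_smul]
          simp only [Pi.smul_def, smul_eq_mul]
          rw [← diagonal_sub]
  rw [key]
  refine (posSemidef_diagonal_iff.mpr fun i => ?_).mul_mul_conjTranspose_same U
  -- entrywise bound
  have hμpos : 0 < μ i := lt_of_lt_of_le hε (hμε i)
  have hεr : (0:ℝ) < ε ^ r := Real.rpow_pos_of_pos hε r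
  have hμr : μ i ^ r ≤ ε ^ r := Real.rpow_le_rpow_of_nonpos hε (hμε i) (by rw [hr]; linarith)
  have hcle : c ≤ (ε ^ r)⁻¹ := by
    have h2p : (0:ℝ) < 2 * p := by linarith
    have : ε ^ ((2 - p) / 2) = (ε ^ r)⁻¹ := by
      rw [← Real.rpow_neg hε.le, hr]; congr 1; ring
    calc c = 2 * p * α := by rw [hc]; ring
      _ ≤ 2 * p * (ε ^ ((2 - p) / 2) / (2 * p)) := by
          exact mul_le_mul_of_nonneg_left hα h2p.le
      _ = ε ^ ((2 - p) / 2) := by field_simp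
      _ = (ε ^ r)⁻¹ := this
  have hc0 : 0 ≤ c := by positivity
  have hmul : c * μ i ^ r ≤ 1 := by
    calc c * μ i ^ r ≤ (ε ^ r)⁻¹ * ε ^ r :=
          mul_le_mul hcle hμr (Real.rpow_pos_of_pos hμpos r).le (by positivity)
      _ = 1 := inv_mul_cancel₀ hεr.ne'
  have hsnn : 0 ≤ s i := Real.sqrt_nonneg _
  nlinarith [mul_nonneg hsnn (sub_nonneg.mpr hmul)]
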